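/- For arbitrary elements (a₀,b₀) and (a₁,b₁) of B_{[0,∞)} there exists (c,d) ∈ B_{[0,∞)} such that (a₀,b₀)·(c,d) ≼ (a₁,b₁), and moreover (a₀,b₀)·(x,y) ≼ (a₁,b₁) for every (x,y) ∈ B_{[0,∞)} with (x,y) ≼ (c,d). Dually, there exists (c′,d′) ∈ B_{[0,∞)} such that (c′,d′)·(a₀,b₀) ≼ (a₁,b₁), and moreover (x,y)·(a₀,b₀) ≼ (a₁,b₁) for every (x,y) ≼ (c′,d′). -/
import Mathlib


/-- The underlying set of the semigroup `B_{[0,∞)}`: pairs of non-negative reals. -/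
abbrev Bsg := {p : ℝ × ℝ // 0 ≤ p.1 ∧ 0 ≤ p.2}

namespace Bsg

/-- The multiplication `(a,b)·(c,d) = (a+c−min b c, b+d−min b c)`. -/
def bmul (u v : Bsg) : Bsg :=
  ⟨(u.1.1 + v.1.1 - min u.1.2 v.1.1, u.1.2 + v.1.2 - min u.1.2 v.1.1),
    by
      refine ⟨?_, ?_⟩
      · show (0:ℝ) ≤ u.1.1 + v.1.1 - min u.1.2 v.1.1
        have h := min_le_right u.1.2 v.1.1
        have h1 := u.2.1; have h2 := v.2.1; linarith
      · show (0:ℝ) ≤ u.1.2 + v.1.2 - min u.1.2 v.1.1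
        have h := min_le_left u.1.2 v.1.1
        have h1 := u.2.2; have h2 := v.2.2; linarith⟩

instance : Semigroup Bsg where
  mul := bmul
  mul_assoc := by
    rintro ⟨⟨a,b⟩,ha,hb⟩ ⟨⟨c,d⟩,hc,hd⟩ ⟨⟨e,g⟩,he,hg⟩
    show bmul (bmul _ _) _ = bmul _ (bmul _ _)
    apply Subtype.ext
    rw [Prod.ext_iff]
    constructor <;>
      simp only [bmul, min_def] <;> split_ifs <;> simp_all <;> linarith

/-- The natural partial order on the inverse semigroup `B_{[0,∞)}`:
`s ≼ t` iff `s = t·e` for some idempotent `e`. -/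
def ple (s t : Bsg) : Prop := ∃ e : Bsg, e * e = e ∧ s = t * e

/-- `L_α^+ = {(x, x+α) : x ≥ 0}`. -/
def Lplus (α : ℝ) : Set Bsg := {p | p.1.2 = p.1.1 + α}

/-- `L_α^− = {(x+α, x) : x ≥ 0}`. -/
def Lminus (α : ℝ) : Set Bsg := {p | p.1.1 = p.1.2 + α}

/-- `↓(a,b)`, the down-set of an element w.r.t. the natural partial order. -/
def lowerSet (t : Bsg) : Set Bsg := {s | ple s t}

/-- `↓°(a,b) = ↓(a,b) \ {(a,b)}`. -/
def lowerSetStrict (t : Bsg) : Set Bsg := lowerSet t \ {t}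

/-- The inversion `(a,b) ↦ (b,a)`. -/
def binv (u : Bsg) : Bsg := ⟨(u.1.2, u.1.1), u.2.2, u.2.1⟩

end Bsg


namespace Bsg

lemma mul_def (u v : Bsg) : u * v = bmul u v := rfl

lemma ple_iff (s t : Bsg) :
    ple s t ↔ 0 ≤ s.1.1 - t.1.1 ∧ s.1.1 - t.1.1 = s.1.2 - t.1.2 := by
  constructor
  · rintro ⟨e, he, rfl⟩
    have hee : e.1.1 = e.1.2 := by
      have h1 := congrArg (fun z : Bsg => z.1.1) he
      have h2 := congrArg (fun z : Bsg => z.1.2) he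
      simp only [mul_def, bmul] at h1 h2
      rcases min_le_left e.1.2 e.1.1 |>.lt_or_eq with h | h
      · rcases le_total e.1.2 e.1.1 with hle | hle
        · have : min e.1.2 e.1.1 = e.1.2 := min_eq_left hle
          rw [this] at h1 h2; linarith
        · have : min e.1.2 e.1.1 = e.1.1 := min_eq_right hle
          rw [this] at h1 h2; linarith
      · rcases le_total e.1.2 e.1.1 with hle | hle
        · have : min e.1.2 e.1.1 = e.1.2 := min_eq_left hle
          rw [this] at h1 h2; linarith
        · have : min e.1.2 e.1.1 = e.1.1 := min_eq_right hle
          rw [this] at h1 h2; linarith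
    simp only [mul_def, bmul]
    rcases le_total t.1.2 e.1.1 with hle | hle
    · have hm : min t.1.2 e.1.1 = t.1.2 := min_eq_left hle
      rw [hm]; constructor <;> simp <;> linarith [e.2.1]
    · have hm : min t.1.2 e.1.1 = e.1.1 := min_eq_right hle
      rw [hm]; constructor <;> simp <;> linarith [e.2.1]
  · rintro ⟨h1, h2⟩
    set x := s.1.1 - t.1.1 with hx
    have hc : 0 ≤ t.1.2 + x := by linarith [t.2.2]
    refine ⟨⟨(t.1.2 + x, t.1.2 + x), hc, hc⟩, ?_, ?_⟩
    · apply Subtype.ext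
      simp only [mul_def, bmul, min_self]
      rw [Prod.ext_iff]
      constructor <;> simp <;> ring
    · apply Subtype.ext
      have hm : min t.1.2 (t.1.2 + x) = t.1.2 := min_eq_left (by linarith)
      simp only [mul_def, bmul, hm]
      rw [Prod.ext_iff]
      constructor
      · show s.1.1 = t.1.1 + (t.1.2 + x) - t.1.2; rw [hx]; ring
      · show s.1.2 = t.1.2 + (t.1.2 + x) - t.1.2; rw [hx] at h2 ⊢; linarith

end Bsg

open Bsg in
/-- for all `(a₀,b₀), (a₁,b₁)` there is `(c,d)` with
`(a₀,b₀)·(c,d) ≼ (a₁,b₁)`, and moreover `(a₀,b₀)·(x,y) ≼ (a₁,b₁)` for every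
`(x,y) ≼ (c,d)`; dually on the other side. -/
theorem stmt12 (u w : Bsg) :
    (∃ c : Bsg, ple (u * c) w ∧ ∀ x : Bsg, ple x c → ple (u * x) w) ∧
    (∃ c' : Bsg, ple (c' * u) w ∧ ∀ x : Bsg, ple x c' → ple (x * u) w) := by
  obtain ⟨⟨a0, b0⟩, ha0, hb0⟩ := u
  obtain ⟨⟨a1, b1⟩, ha1, hb1⟩ := w
  simp only at ha0 hb0 ha1 hb1
  constructor
  · set m := min a0 a1 with hmdef
    have hm : m ≤ a0 := min_le_left _ _
    have hm' : m ≤ a1 := min_le_right _ _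
    refine ⟨⟨(b0 + a1 - m, a0 + b1 - m), ⟨?_, ?_⟩⟩, ?_, ?_⟩
    · show (0:ℝ) ≤ b0 + a1 - m; linarith
    · show (0:ℝ) ≤ a0 + b1 - m; linarith
    · rw [ple_iff]
      have h : min b0 (b0 + a1 - m) = b0 := min_eq_left (by linarith)
      constructor
      · show (0:ℝ) ≤ (a0 + (b0 + a1 - m) - min b0 (b0 + a1 - m)) - a1
        rw [h]; linarith
      · show (a0 + (b0 + a1 - m) - min b0 (b0 + a1 - m)) - a1
            = (b0 + (a0 + b1 - m) - min b0 (b0 + a1 - m)) - b1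
        rw [h]; ring
    · intro x hx
      rw [ple_iff] at hx ⊢
      obtain ⟨hx1, hx2⟩ := hx
      have hb : b0 ≤ x.1.1 := by
        have : (0:ℝ) ≤ x.1.1 - (b0 + a1 - m) := hx1
        linarith
      have h : min b0 x.1.1 = b0 := min_eq_left hb
      have hx1' : (0:ℝ) ≤ x.1.1 - (b0 + a1 - m) := hx1
      have hx2' : x.1.1 - (b0 + a1 - m) = x.1.2 - (a0 + b1 - m) := hx2
      constructor
      · show (0:ℝ) ≤ (a0 + x.1.1 - min b0 x.1.1) - a1
        rw [h]; linarith
      · show (a0 + x.1.1 - min b0 x.1.1) - a1 = (b0 + x.1.2 - min b0 x.1.1) - b1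
        rw [h]; linarith
  · set m := min b1 b0 with hmdef
    have hm : m ≤ b1 := min_le_left _ _
    have hm' : m ≤ b0 := min_le_right _ _
    refine ⟨⟨(a1 + b0 - m, b1 + a0 - m), ⟨?_, ?_⟩⟩, ?_, ?_⟩
    · show (0:ℝ) ≤ a1 + b0 - m; linarith
    · show (0:ℝ) ≤ b1 + a0 - m; linarith
    · rw [ple_iff]
      have h : min (b1 + a0 - m) a0 = a0 := min_eq_right (by linarith)
      constructor
      · show (0:ℝ) ≤ ((a1 + b0 - m) + a0 - min (b1 + a0 - m) a0) - a1
        rw [h]; linarith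
      · show ((a1 + b0 - m) + a0 - min (b1 + a0 - m) a0) - a1
            = ((b1 + a0 - m) + b0 - min (b1 + a0 - m) a0) - b1
        rw [h]; ring
    · intro x hx
      rw [ple_iff] at hx ⊢
      obtain ⟨hx1, hx2⟩ := hx
      have hx1' : (0:ℝ) ≤ x.1.1 - (a1 + b0 - m) := hx1
      have hx2' : x.1.1 - (a1 + b0 - m) = x.1.2 - (b1 + a0 - m) := hx2
      have ha : a0 ≤ x.1.2 := by linarith
      have h : min x.1.2 a0 = a0 := min_eq_right ha
      constructor
      · show (0:ℝ) ≤ (x.1.1 + a0 - min x.1.2 a0) - a1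
        rw [h]; linarith
      · show (x.1.1 + a0 - min x.1.2 a0) - a1 = (x.1.2 + b0 - min x.1.2 a0) - b1
        rw [h]; linarith
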